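/- Let G be a finite group and H, K subgroups. Then H and K are almost conjugate if and only if the permutation representations of G on the coset spaces G/H and G/K have equal characters (equivalently, the complex permutation representations ℂ[G/H] and ℂ[G/K] are isomorphic as G-representations). -/
import Mathlib

section Aux

variable {G : Type*} [Group G]

private lemma smul_mk_eq_iff (H : Subgroup G) (g x : G) :
    g • (↑x : G ⧸ H) = ↑x ↔ x⁻¹ * g * x ∈ H := by
  rw [show g • (↑x : G ⧸ H) = ↑(g * x) from rfl, QuotientGroup.eq]
  constructor
  · intro h; have := H.inv_mem h; simpa [mul_assoc] using this
  · intro h; have := H.inv_mem h; simpa [mul_assoc] using this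

/-- Equiv 1: fixed points × H ≃ {x | x⁻¹gx ∈ H}. -/
private noncomputable def e1 (H : Subgroup G) (g : G) :
    {q : G ⧸ H // g • q = q} × H ≃ {x : G // x⁻¹ * g * x ∈ H} where
  toFun p := ⟨p.1.1.out * p.2, by
    rw [← smul_mk_eq_iff H g,
      QuotientGroup.mk_mul_of_mem _ p.2.2, QuotientGroup.out_eq']
    exact p.1.2⟩
  invFun x := (⟨(↑x.1 : G ⧸ H), by rw [smul_mk_eq_iff]; exact x.2⟩,
    ⟨(↑x.1 : G ⧸ H).out⁻¹ * x.1, by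
      rw [← QuotientGroup.eq, QuotientGroup.out_eq']⟩)
  left_inv := by
    rintro ⟨⟨q, hq⟩, h⟩
    have hmk : ((↑(q.out * (h : G)) : G ⧸ H)) = q := by
      rw [QuotientGroup.mk_mul_of_mem _ h.2, QuotientGroup.out_eq']
    ext
    · exact hmk
    · show (((↑(q.out * (h : G)) : G ⧸ H)).out⁻¹ * (q.out * h) : G) = h
      rw [hmk, inv_mul_cancel_left]
  right_inv := by
    rintro ⟨x, hx⟩
    ext
    show ((↑x : G ⧸ H).out * ((↑x : G ⧸ H).out⁻¹ * x) : G) = x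
    rw [mul_inv_cancel_left]

private noncomputable def xw {H : Subgroup G} {g : G}
    (h : {h : H // IsConj g (h : G)}) : G :=
  (Classical.choose (isConj_iff.mp h.2))⁻¹

private lemma xw_spec {H : Subgroup G} {g : G} (h : {h : H // IsConj g (h : G)}) :
    (xw h)⁻¹ * g * xw h = (h : G) := by
  have := Classical.choose_spec (isConj_iff.mp h.2)
  simpa [xw] using this

private lemma e2_conj {H : Subgroup G} {g : G}
    (z : (Subgroup.centralizer ({g} : Set G) : Subgroup G))
    (h : {h : H // IsConj g (h : G)}) :
    ((z : G) * xw h)⁻¹ * g * ((z : G) * xw h) = ((h : H) : G) := by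
  have hz : g * (z : G) = (z : G) * g :=
    Subgroup.mem_centralizer_iff.mp z.2 g (by simp)
  calc ((z : G) * xw h)⁻¹ * g * ((z : G) * xw h)
      = (xw h)⁻¹ * ((z : G)⁻¹ * (g * (z : G))) * xw h := by group
    _ = (xw h)⁻¹ * g * xw h := by rw [hz]; group
    _ = ((h : H) : G) := xw_spec h

/-- Equiv 2: centralizer × {h ∈ H | h ~ g} ≃ {x | x⁻¹gx ∈ H}. -/
private noncomputable def e2 (H : Subgroup G) (g : G) :
    (Subgroup.centralizer ({g} : Set G) : Subgroup G) × {h : H // IsConj g (h : G)}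
      ≃ {x : G // x⁻¹ * g * x ∈ H} :=
  Equiv.ofBijective
    (fun p => ⟨(p.1 : G) * xw p.2, by rw [e2_conj p.1 p.2]; exact (p.2 : H).2⟩)
    (by
      constructor
      · rintro ⟨z, h⟩ ⟨z', h'⟩ hv
        have hv' : (z : G) * xw h = (z' : G) * xw h' := congrArg Subtype.val hv
        have hh : h = h' := by
          apply Subtype.ext; apply Subtype.ext
          rw [← e2_conj z h, ← e2_conj z' h', hv']
        subst hh
        have : (z : G) = (z' : G) := mul_right_cancel hv'
        exact Prod.ext (Subtype.ext this) rfl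
      · rintro ⟨x, hx⟩
        have hconj : IsConj g (x⁻¹ * g * x) := isConj_iff.mpr ⟨x⁻¹, by group⟩
        set t : {h : H // IsConj g (h : G)} := ⟨⟨x⁻¹ * g * x, hx⟩, hconj⟩ with ht
        have h1 : (xw t)⁻¹ * g * xw t = x⁻¹ * g * x := xw_spec t
        have hzmem : x * (xw t)⁻¹ ∈ Subgroup.centralizer ({g} : Set G) := by
          rw [Subgroup.mem_centralizer_iff]
          intro a ha
          rw [Set.mem_singleton_iff.mp ha]
          calc g * (x * (xw t)⁻¹)
              = x * (x⁻¹ * g * x) * (xw t)⁻¹ := by group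
            _ = x * ((xw t)⁻¹ * g * xw t) * (xw t)⁻¹ := by rw [h1]
            _ = x * (xw t)⁻¹ * g := by group
        refine ⟨(⟨x * (xw t)⁻¹, hzmem⟩, t), ?_⟩
        apply Subtype.ext
        show x * (xw t)⁻¹ * xw t = x
        rw [inv_mul_cancel_right])

private lemma key_count [Finite G] (H : Subgroup G) (g : G) :
    Nat.card {q : G ⧸ H // g • q = q} * Nat.card H
      = Nat.card (Subgroup.centralizer ({g} : Set G))
          * Nat.card {h : H // IsConj g (h : G)} := by
  rw [← Nat.card_prod, ← Nat.card_prod, Nat.card_congr (e1 H g),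
    Nat.card_congr (e2 H g).symm]

end Aux

def AlmostConjugate {G : Type*} [Group G] (H K : Subgroup G) : Prop :=
  ∃ f : H ≃ K, ∀ h : H, IsConj (h : G) ((f h : K) : G)

/-- H and K are almost conjugate iff the permutation representations of G on
G/H and G/K have equal characters, i.e. each g ∈ G fixes the same number of
cosets in G/H as in G/K. -/
theorem almostConjugate_iff_permChar_eq
    {G : Type*} [Group G] [Finite G] (H K : Subgroup G) :
    AlmostConjugate H K ↔
      ∀ g : G, Nat.card {x : G ⧸ H // g • x = x}
        = Nat.card {x : G ⧸ K // g • x = x} := by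
  have hHpos : 0 < Nat.card H := Nat.card_pos
  have hKpos : 0 < Nat.card K := Nat.card_pos
  constructor
  · rintro ⟨f, hf⟩ g
    have hcardHK : Nat.card H = Nat.card K := Nat.card_congr f
    have hT : Nat.card {h : H // IsConj g (h : G)}
        = Nat.card {k : K // IsConj g (k : G)} := by
      refine Nat.card_congr ⟨fun h => ⟨f h.1, h.2.trans (hf h.1)⟩,
        fun k => ⟨f.symm k.1, k.2.trans ?_⟩, ?_, ?_⟩
      · have := hf (f.symm k.1)
        rw [f.apply_symm_apply] at this
        exact this.symm
      · intro h; apply Subtype.ext; simp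
      · intro k; apply Subtype.ext; simp
    have h1 := key_count H g
    have h2 := key_count K g
    rw [hcardHK, hT, ← h2] at h1
    exact Nat.eq_of_mul_eq_mul_right hKpos h1
  · intro hchar
    have hq : Nat.card (G ⧸ H) = Nat.card (G ⧸ K) := by
      have := hchar 1
      have eH : {x : G ⧸ H // (1 : G) • x = x} ≃ (G ⧸ H) :=
        Equiv.subtypeUnivEquiv (by simp)
      have eK : {x : G ⧸ K // (1 : G) • x = x} ≃ (G ⧸ K) :=
        Equiv.subtypeUnivEquiv (by simp)
      rwa [Nat.card_congr eH, Nat.card_congr eK] at this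
    have hqpos : 0 < Nat.card (G ⧸ H) := Nat.card_pos
    have hcardHK : Nat.card H = Nat.card K := by
      have h1 := Subgroup.card_eq_card_quotient_mul_card_subgroup H
      have h2 := Subgroup.card_eq_card_quotient_mul_card_subgroup K
      rw [← hq] at h2
      exact Nat.eq_of_mul_eq_mul_left hqpos (h1 ▸ h2)
    have hT : ∀ g : G, Nat.card {h : H // IsConj g (h : G)}
        = Nat.card {k : K // IsConj g (k : G)} := by
      intro g
      have h1 := key_count H g
      have h2 := key_count K g
      rw [hchar g, hcardHK, h2] at h1
      have hZpos : 0 < Nat.card (Subgroup.centralizer ({g} : Set G)) := Nat.card_pos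
      exact (Nat.eq_of_mul_eq_mul_left hZpos h1).symm
    have hfib : ∀ c : ConjClasses G,
        Nonempty ({h : H // ConjClasses.mk (h : G) = c}
          ≃ {k : K // ConjClasses.mk (k : G) = c}) := by
      intro c
      obtain ⟨g, rfl⟩ := ConjClasses.mk_surjective c
      have eH : {h : H // ConjClasses.mk (h : G) = ConjClasses.mk g}
          ≃ {h : H // IsConj g (h : G)} :=
        Equiv.subtypeEquivRight (fun h => by
          rw [ConjClasses.mk_eq_mk_iff_isConj, isConj_comm])
      have eK : {k : K // ConjClasses.mk (k : G) = ConjClasses.mk g}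
          ≃ {k : K // IsConj g (k : G)} :=
        Equiv.subtypeEquivRight (fun k => by
          rw [ConjClasses.mk_eq_mk_iff_isConj, isConj_comm])
      refine Finite.card_eq.mp ?_
      rw [Nat.card_congr eH, Nat.card_congr eK]
      exact hT g
    let e : ∀ c : ConjClasses G, {h : H // ConjClasses.mk (h : G) = c}
        ≃ {k : K // ConjClasses.mk (k : G) = c} := fun c => (hfib c).some
    refine ⟨Equiv.ofFiberEquiv e, fun h => ?_⟩
    have := Equiv.ofFiberEquiv_map e h
    exact (ConjClasses.mk_eq_mk_iff_isConj.mp this).symm
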